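/- Let m, n, r be positive integers with gcd(m,n) = gcd(m, r-1) = 1 and r^n ≡ 1 (mod m), and let d = o_m(r). Every automorphism of ZM(m,n,r) is of the form b^u a^v ↦ b^{yu} a^{x₁v + x₂[u]_r} (u, v ≥ 0) for a unique triple of integers (x₁, x₂, y) satisfying 0 ≤ x₁, x₂ < m, gcd(x₁, m) = 1, 0 ≤ y < n and y ≡ 1 (mod d). -/

import Mathlib

/-- Concrete model of the ZM-group: pairs `(u, v)` representing `b^u a^v`,
multiplied via a character `χ` giving the conjugation action. -/
def ZmModel (m n : ℕ) (_χ : Multiplicative (ZMod n) →* (ZMod m)ˣ) : Type :=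
  ZMod n × ZMod m

namespace ZmModel

variable {m n : ℕ} {χ : Multiplicative (ZMod n) →* (ZMod m)ˣ}

private def mul' (g h : ZmModel m n χ) : ZmModel m n χ :=
  (g.1 + h.1, g.2 * (χ (Multiplicative.ofAdd h.1) : ZMod m) + h.2)

private def inv' (g : ZmModel m n χ) : ZmModel m n χ :=
  (-g.1, -g.2 * ((χ (Multiplicative.ofAdd (-g.1)) : (ZMod m)ˣ) : ZMod m))

private theorem chi_add (x y : ZMod n) :
    χ (Multiplicative.ofAdd (x + y)) =
      χ (Multiplicative.ofAdd x) * χ (Multiplicative.ofAdd y) := by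
  rw [← map_mul, ← ofAdd_add]

instance : Group (ZmModel m n χ) where
  mul := mul'
  one := ((0 : ZMod n), (0 : ZMod m))
  inv := inv'
  mul_assoc g h k := by
    show mul' (mul' g h) k = mul' g (mul' h k)
    unfold mul'
    refine Prod.ext (add_assoc _ _ _) ?_
    simp only [chi_add, Units.val_mul]
    ring
  one_mul g := by
    show mul' ((0 : ZMod n), (0 : ZMod m)) g = g
    unfold mul'
    refine Prod.ext (zero_add _) ?_
    simp
  mul_one g := by
    show mul' g ((0 : ZMod n), (0 : ZMod m)) = g
    unfold mul'
    refine Prod.ext (add_zero _) ?_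
    simp only [ofAdd_zero, map_one, Units.val_one, mul_one, add_zero]
  inv_mul_cancel g := by
    show mul' (inv' g) g = ((0 : ZMod n), (0 : ZMod m))
    unfold mul' inv'
    refine Prod.ext (neg_add_cancel _) ?_
    have h1 : χ (Multiplicative.ofAdd (-g.1)) * χ (Multiplicative.ofAdd g.1) = 1 := by
      rw [← chi_add, neg_add_cancel, ofAdd_zero, map_one]
    calc -g.2 * ((χ (Multiplicative.ofAdd (-g.1)) : (ZMod m)ˣ) : ZMod m) *
          ((χ (Multiplicative.ofAdd g.1) : (ZMod m)ˣ) : ZMod m) + g.2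
        = -(g.2 * ((χ (Multiplicative.ofAdd (-g.1)) * χ (Multiplicative.ofAdd g.1) :
            (ZMod m)ˣ) : ZMod m)) + g.2 := by rw [Units.val_mul]; ring
      _ = 0 := by rw [h1, Units.val_one, mul_one, neg_add_cancel]

theorem mul_def (g h : ZmModel m n χ) :
    g * h = (g.1 + h.1, g.2 * (χ (Multiplicative.ofAdd h.1) : ZMod m) + h.2) := rfl

theorem one_def : (1 : ZmModel m n χ) = ((0 : ZMod n), (0 : ZMod m)) := rfl

theorem pow_fst (g : ZmModel m n χ) (k : ℕ) : (g ^ k).1 = k • g.1 := by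
  induction k with
  | zero => simp [one_def]
  | succ k ih => rw [pow_succ, mul_def, ih, succ_nsmul]

/-- The generator `a` in the model. -/
def A (m n : ℕ) (χ : Multiplicative (ZMod n) →* (ZMod m)ˣ) : ZmModel m n χ :=
  ((0 : ZMod n), (1 : ZMod m))

/-- The generator `b` in the model. -/
def B (m n : ℕ) (χ : Multiplicative (ZMod n) →* (ZMod m)ˣ) : ZmModel m n χ :=
  ((1 : ZMod n), (0 : ZMod m))

theorem a_pow (v : ℕ) : A m n χ ^ v = ((0 : ZMod n), (v : ZMod m)) := by
  induction v with
  | zero => simp [one_def]; rfl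
  | succ v ih => rw [pow_succ, mul_def, ih, A]; simp; rfl

theorem b_pow (u : ℕ) : B m n χ ^ u = (((u : ZMod n)), (0 : ZMod m)) := by
  induction u with
  | zero => simp [one_def]; rfl
  | succ u ih => rw [pow_succ, mul_def, ih, B]; simp; rfl

theorem b_pow_mul_a_pow (u v : ℕ) :
    B m n χ ^ u * A m n χ ^ v = (((u : ZMod n)), ((v : ZMod m))) := by
  rw [mul_def, a_pow, b_pow]; simp; rfl

end ZmModel

/-- The relators of the ZM-group presentation `⟨a, b ∣ a^m = b^n = 1, b⁻¹ a b = a^r⟩`,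
with `true ↦ a` and `false ↦ b`. -/
def zmRels (m n r : ℕ) : Set (FreeGroup Bool) :=
  { FreeGroup.of true ^ m,
    FreeGroup.of false ^ n,
    (FreeGroup.of false)⁻¹ * FreeGroup.of true * FreeGroup.of false * (FreeGroup.of true ^ r)⁻¹ }

/-- The ZM-group `ZM(m,n,r)` as a presented group. -/
abbrev ZMGroup (m n r : ℕ) := PresentedGroup (zmRels m n r)

/-- The generator `a` of `ZM(m,n,r)`. -/
def zmA (m n r : ℕ) : ZMGroup m n r := PresentedGroup.of true

/-- The generator `b` of `ZM(m,n,r)`. -/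
def zmB (m n r : ℕ) : ZMGroup m n r := PresentedGroup.of false

/-- `[u]_r = 1 + r + ⋯ + r^(u-1)`, with `[0]_r = 0`. -/
def repunit (r u : ℕ) : ℕ := ∑ i ∈ Finset.range u, r ^ i

theorem zm_rel_one {m n r : ℕ} {x : FreeGroup Bool} (hx : x ∈ zmRels m n r) :
    PresentedGroup.mk (zmRels m n r) x = 1 :=
  (QuotientGroup.eq_one_iff x).mpr (Subgroup.subset_normalClosure hx)

theorem zmA_pow (m n r : ℕ) : zmA m n r ^ m = 1 := by
  have := zm_rel_one (m := m) (n := n) (r := r) (Set.mem_insert _ _)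
  rw [map_pow] at this
  exact this

theorem zmB_pow (m n r : ℕ) : zmB m n r ^ n = 1 := by
  have := zm_rel_one (m := m) (n := n) (r := r)
    (Set.mem_insert_of_mem _ (Set.mem_insert _ _))
  rw [map_pow] at this
  exact this

theorem zm_comm (m n r : ℕ) : zmA m n r * zmB m n r = zmB m n r * zmA m n r ^ r := by
  have h := zm_rel_one (m := m) (n := n) (r := r)
    (Set.mem_insert_of_mem _ (Set.mem_insert_of_mem _ rfl))
  rw [map_mul, map_mul, map_mul, map_inv, map_inv, map_pow] at h
  have h2 : (zmB m n r)⁻¹ * zmA m n r * zmB m n r = zmA m n r ^ r :=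
    mul_inv_eq_one.mp h
  calc zmA m n r * zmB m n r
      = zmB m n r * ((zmB m n r)⁻¹ * zmA m n r * zmB m n r) := by group
    _ = zmB m n r * zmA m n r ^ r := by rw [h2]

theorem zm_swap (m n r : ℕ) (v u : ℕ) :
    zmA m n r ^ v * zmB m n r ^ u = zmB m n r ^ u * zmA m n r ^ (v * r ^ u) := by
  induction u with
  | zero => simp
  | succ u ih =>
    have key : ∀ w : ℕ, zmA m n r ^ w * zmB m n r = zmB m n r * zmA m n r ^ (w * r) := by
      intro w
      induction w with
      | zero => simp
      | succ w ihw =>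
        calc zmA m n r ^ (w + 1) * zmB m n r
            = zmA m n r ^ w * (zmA m n r * zmB m n r) := by rw [pow_succ, mul_assoc]
          _ = zmA m n r ^ w * zmB m n r * zmA m n r ^ r := by
              rw [zm_comm, ← mul_assoc]
          _ = zmB m n r * zmA m n r ^ (w * r) * zmA m n r ^ r := by rw [ihw]
          _ = zmB m n r * zmA m n r ^ ((w + 1) * r) := by
              rw [mul_assoc, ← pow_add, add_mul, one_mul]
    calc zmA m n r ^ v * zmB m n r ^ (u + 1)
        = zmA m n r ^ v * zmB m n r ^ u * zmB m n r := by rw [pow_succ, mul_assoc]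
      _ = zmB m n r ^ u * (zmA m n r ^ (v * r ^ u) * zmB m n r) := by
          rw [ih, mul_assoc]
      _ = zmB m n r ^ u * (zmB m n r * zmA m n r ^ (v * r ^ u * r)) := by rw [key]
      _ = zmB m n r ^ (u + 1) * zmA m n r ^ (v * r ^ (u + 1)) := by
          have hex : v * r ^ u * r = v * r ^ (u + 1) := by rw [pow_succ, mul_assoc]
          rw [← mul_assoc, ← pow_succ, hex]

theorem zm_nf_mul (m n r : ℕ) (u v u' v' : ℕ) :
    (zmB m n r ^ u * zmA m n r ^ v) * (zmB m n r ^ u' * zmA m n r ^ v') =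
      zmB m n r ^ (u + u') * zmA m n r ^ (v * r ^ u' + v') := by
  calc (zmB m n r ^ u * zmA m n r ^ v) * (zmB m n r ^ u' * zmA m n r ^ v')
      = zmB m n r ^ u * (zmA m n r ^ v * zmB m n r ^ u') * zmA m n r ^ v' := by group
    _ = zmB m n r ^ u * (zmB m n r ^ u' * zmA m n r ^ (v * r ^ u')) * zmA m n r ^ v' := by
        rw [zm_swap]
    _ = zmB m n r ^ (u + u') * zmA m n r ^ (v * r ^ u' + v') := by
        rw [pow_add, pow_add]; group

theorem zm_nf (m n r : ℕ) (hm : 0 < m) (hn : 0 < n) (g : ZMGroup m n r) :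
    ∃ u v : ℕ, g = zmB m n r ^ u * zmA m n r ^ v := by
  have hgen := PresentedGroup.closure_range_of (zmRels m n r)
  have hg : g ∈ Subgroup.closure (Set.range (PresentedGroup.of :
      Bool → PresentedGroup (zmRels m n r))) := by rw [hgen]; trivial
  induction hg using Subgroup.closure_induction with
  | mem x hx =>
    obtain ⟨c, rfl⟩ := hx
    cases c
    · exact ⟨1, 0, by simp [zmB]⟩
    · exact ⟨0, 1, by simp [zmA]⟩
  | one => exact ⟨0, 0, by simp⟩
  | mul x y _ _ hx hy =>
    obtain ⟨u, v, rfl⟩ := hx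
    obtain ⟨u', v', rfl⟩ := hy
    exact ⟨u + u', v * r ^ u' + v', zm_nf_mul m n r u v u' v'⟩
  | inv x _ hx =>
    obtain ⟨u, v, rfl⟩ := hx
    refine ⟨u * (n - 1), v * (m - 1) * r ^ (u * (n - 1)), inv_eq_of_mul_eq_one_right ?_⟩
    rw [zm_nf_mul]
    have e1 : u + u * (n - 1) = n * u := by
      have : 1 + (n - 1) = n := by omega
      calc u + u * (n - 1) = u * (1 + (n - 1)) := by ring
        _ = n * u := by rw [this]; ring
    have e2 : v * r ^ (u * (n - 1)) + v * (m - 1) * r ^ (u * (n - 1))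
        = m * (v * r ^ (u * (n - 1))) := by
      have : 1 + (m - 1) = m := by omega
      calc v * r ^ (u * (n - 1)) + v * (m - 1) * r ^ (u * (n - 1))
          = (1 + (m - 1)) * (v * r ^ (u * (n - 1))) := by ring
        _ = m * (v * r ^ (u * (n - 1))) := by rw [this]
    rw [e1, e2, pow_mul, pow_mul, zmB_pow, zmA_pow, one_pow, one_pow, one_mul]
theorem zm_pow (m n r : ℕ) (s t u : ℕ) :
    (zmB m n r ^ s * zmA m n r ^ t) ^ u =
      zmB m n r ^ (s * u) * zmA m n r ^ (t * ∑ i ∈ Finset.range u, r ^ (s * i)) := by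
  induction u with
  | zero => simp
  | succ u ih =>
    rw [pow_succ, ih, zm_nf_mul]
    have e1 : s * u + s = s * (u + 1) := by ring
    have e2 : t * (∑ i ∈ Finset.range u, r ^ (s * i)) * r ^ s + t
        = t * ∑ i ∈ Finset.range (u + 1), r ^ (s * i) := by
      rw [Finset.sum_range_succ']
      have : ∀ i : ℕ, r ^ (s * (i + 1)) = r ^ (s * i) * r ^ s := by
        intro i; rw [← pow_add]; ring_nf
      simp only [this, Nat.mul_zero, pow_zero, ← Finset.sum_mul]
      ring
    rw [e1, e2]

/-- The character `u ↦ ρ^u.val` used to build the model. -/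
def zmChar (m n : ℕ) [NeZero n] (ρ : (ZMod m)ˣ) (hρ : ρ ^ n = 1) :
    Multiplicative (ZMod n) →* (ZMod m)ˣ where
  toFun u := ρ ^ (Multiplicative.toAdd u).val
  map_one' := by
    show ρ ^ (0 : ZMod n).val = 1
    rw [ZMod.val_zero, pow_zero]
  map_mul' x y := by
    have key : ∀ k : ℕ, ρ ^ (k % n) = ρ ^ k := fun k => by
      conv_rhs => rw [← Nat.div_add_mod k n]
      rw [pow_add, pow_mul, hρ, one_pow, one_mul]
    show ρ ^ (Multiplicative.toAdd x + Multiplicative.toAdd y).val = _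
    rw [ZMod.val_add, key, pow_add]

theorem zmChar_natCast (m n : ℕ) [NeZero n] (ρ : (ZMod m)ˣ) (hρ : ρ ^ n = 1) (u : ℕ) :
    zmChar m n ρ hρ (Multiplicative.ofAdd ((u : ℕ) : ZMod n)) = ρ ^ u := by
  have key : ∀ k : ℕ, ρ ^ (k % n) = ρ ^ k := fun k => by
    conv_rhs => rw [← Nat.div_add_mod k n]
    rw [pow_add, pow_mul, hρ, one_pow, one_mul]
  show ρ ^ (((u : ℕ) : ZMod n)).val = ρ ^ u
  rw [ZMod.val_natCast, key]

/-- The canonical homomorphism from the presented ZM-group to the concrete model. -/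
def zmToModel (m n r : ℕ) [NeZero n] (ρ : (ZMod m)ˣ) (hρ : ρ ^ n = 1)
    (hρr : (ρ : ZMod m) = (r : ℕ)) :
    ZMGroup m n r →* ZmModel m n (zmChar m n ρ hρ) := by
  refine PresentedGroup.toGroup (f := fun x => if x then ZmModel.A m n (zmChar m n ρ hρ)
    else ZmModel.B m n (zmChar m n ρ hρ)) ?_
  intro w hw
  have hab : ZmModel.A m n (zmChar m n ρ hρ) * ZmModel.B m n (zmChar m n ρ hρ)
      = ZmModel.B m n (zmChar m n ρ hρ) * ZmModel.A m n (zmChar m n ρ hρ) ^ r := by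
    rw [ZmModel.mul_def, ZmModel.mul_def, ZmModel.a_pow, ZmModel.A, ZmModel.B]
    refine Prod.ext (by simp) ?_
    show 1 * ((zmChar m n ρ hρ) (Multiplicative.ofAdd (1 : ZMod n)) : ZMod m) + 0
        = 0 * _ + ((r : ℕ) : ZMod m)
    have : ((1 : ZMod n)) = ((1 : ℕ) : ZMod n) := by norm_num
    rw [this, zmChar_natCast, pow_one, one_mul, zero_mul, zero_add, add_zero, hρr]
  simp only [zmRels, Set.mem_insert_iff, Set.mem_singleton_iff] at hw
  rcases hw with rfl | rfl | rfl
  · rw [map_pow, FreeGroup.lift_apply_of, if_pos rfl, ZmModel.a_pow, ZmModel.one_def,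
      ZMod.natCast_self]
  · rw [map_pow, FreeGroup.lift_apply_of, if_neg (by simp), ZmModel.b_pow, ZmModel.one_def,
      ZMod.natCast_self]
  · rw [map_mul, map_mul, map_mul, map_inv, map_inv, map_pow, FreeGroup.lift_apply_of,
      FreeGroup.lift_apply_of, if_pos rfl, if_neg (by simp)]
    rw [mul_inv_eq_one, mul_assoc, hab]
    group

theorem zmToModel_a (m n r : ℕ) [NeZero n] (ρ : (ZMod m)ˣ) (hρ : ρ ^ n = 1)
    (hρr : (ρ : ZMod m) = (r : ℕ)) :
    zmToModel m n r ρ hρ hρr (zmA m n r) = ZmModel.A m n (zmChar m n ρ hρ) := by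
  show zmToModel m n r ρ hρ hρr (PresentedGroup.of true) = _
  rw [zmToModel, PresentedGroup.toGroup.of]
  simp

theorem zmToModel_b (m n r : ℕ) [NeZero n] (ρ : (ZMod m)ˣ) (hρ : ρ ^ n = 1)
    (hρr : (ρ : ZMod m) = (r : ℕ)) :
    zmToModel m n r ρ hρ hρr (zmB m n r) = ZmModel.B m n (zmChar m n ρ hρ) := by
  show zmToModel m n r ρ hρ hρr (PresentedGroup.of false) = _
  rw [zmToModel, PresentedGroup.toGroup.of]
  simp

theorem zmToModel_nf (m n r : ℕ) [NeZero n] (ρ : (ZMod m)ˣ) (hρ : ρ ^ n = 1)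
    (hρr : (ρ : ZMod m) = (r : ℕ)) (u v : ℕ) :
    zmToModel m n r ρ hρ hρr (zmB m n r ^ u * zmA m n r ^ v)
      = (((u : ZMod n)), ((v : ZMod m))) := by
  rw [map_mul, map_pow, map_pow, zmToModel_a, zmToModel_b, ZmModel.b_pow_mul_a_pow]

theorem zm_nf_eq_iff (m n r : ℕ) [NeZero n] (ρ : (ZMod m)ˣ) (hρ : ρ ^ n = 1)
    (hρr : (ρ : ZMod m) = (r : ℕ)) (u v u' v' : ℕ) :
    zmB m n r ^ u * zmA m n r ^ v = zmB m n r ^ u' * zmA m n r ^ v' ↔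
      (u ≡ u' [MOD n] ∧ v ≡ v' [MOD m]) := by
  constructor
  · intro h
    have := congrArg (zmToModel m n r ρ hρ hρr) h
    rw [zmToModel_nf, zmToModel_nf] at this
    replace this : ((u : ZMod n) = u' ∧ (v : ZMod m) = v') := Prod.mk.inj this
    exact ⟨(ZMod.natCast_eq_natCast_iff _ _ _).mp this.1,
      (ZMod.natCast_eq_natCast_iff _ _ _).mp this.2⟩
  · rintro ⟨h1, h2⟩
    have hb : zmB m n r ^ u = zmB m n r ^ u' :=
      pow_eq_pow_iff_modEq.mpr
        (h1.of_dvd (orderOf_dvd_of_pow_eq_one (zmB_pow m n r)))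
    have ha : zmA m n r ^ v = zmA m n r ^ v' :=
      pow_eq_pow_iff_modEq.mpr
        (h2.of_dvd (orderOf_dvd_of_pow_eq_one (zmA_pow m n r)))
    rw [hb, ha]


/-- **Theorem 2.1.** Every automorphism of `ZM(m,n,r)` is given by
`b^u a^v ↦ b^(yu) a^(x₁ v + x₂ [u]_r)` for a unique triple `(x₁, x₂, y)` with
`0 ≤ x₁, x₂ < m`, `gcd(x₁, m) = 1`, `0 ≤ y < n` and `y ≡ 1 (mod d)`, where `d = o_m(r)`. -/
theorem zmGroup_aut_unique_triple (m n r : ℕ) (hm : 0 < m) (hn : 0 < n) (hr : 0 < r)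
    (hmn : Nat.gcd m n = 1) (hmr : Nat.gcd m (r - 1) = 1) (hrn : r ^ n ≡ 1 [MOD m])
    (f : ZMGroup m n r ≃* ZMGroup m n r) :
    ∃! t : ℕ × ℕ × ℕ,
      (t.1 < m ∧ t.2.1 < m ∧ Nat.gcd t.1 m = 1 ∧ t.2.2 < n ∧
        t.2.2 ≡ 1 [MOD orderOf (r : ZMod m)]) ∧
      ∀ u v : ℕ, f (zmB m n r ^ u * zmA m n r ^ v) =
        zmB m n r ^ (t.2.2 * u) * zmA m n r ^ (t.1 * v + t.2.1 * repunit r u) := by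

  haveI : NeZero m := ⟨hm.ne'⟩
  haveI : NeZero n := ⟨hn.ne'⟩
  -- the casted `r` is a unit of order dividing `n`
  have hR : ((r : ℕ) : ZMod m) ^ n = 1 := by
    have := (ZMod.natCast_eq_natCast_iff (r ^ n) 1 m).mpr hrn
    push_cast at this
    exact this
  have hu : IsUnit ((r : ℕ) : ZMod m) := IsUnit.of_pow_eq_one hR hn.ne'
  have hρr : (hu.unit : ZMod m) = ((r : ℕ) : ZMod m) := hu.unit_spec
  have hρn : hu.unit ^ n = 1 :=
    Units.ext (by rw [Units.val_pow_eq_pow_val, hρr, hR, Units.val_one])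
  have NF := zm_nf_eq_iff m n r hu.unit hρn hρr
  -- the image of `a`
  obtain ⟨u₀, v₀, hfa0⟩ := zm_nf m n r hm hn (f (zmA m n r))
  have hfam : f (zmA m n r) ^ m = 1 := by rw [← map_pow, zmA_pow, map_one]
  have hu₀ : u₀ ≡ 0 [MOD n] := by
    rw [hfa0, zm_pow] at hfam
    have h1 : zmB m n r ^ (u₀ * m) * zmA m n r ^ (v₀ * ∑ i ∈ Finset.range m, r ^ (u₀ * i))
        = zmB m n r ^ 0 * zmA m n r ^ 0 := by simpa using hfam
    have h2 := (NF _ _ _ _ |>.mp h1).1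
    have h3 : n ∣ u₀ * m := (Nat.modEq_zero_iff_dvd).mp h2
    have h4 : Nat.Coprime n m := Nat.Coprime.symm hmn
    exact (Nat.modEq_zero_iff_dvd).mpr (h4.dvd_of_dvd_mul_right h3)
  set x₁ := v₀ % m with hx₁def
  have hfa : f (zmA m n r) = zmA m n r ^ x₁ := by
    have : f (zmA m n r) = zmB m n r ^ 0 * zmA m n r ^ x₁ := by
      rw [hfa0]
      exact (NF _ _ _ _).mpr ⟨hu₀, (Nat.mod_modEq v₀ m).symm⟩
    simpa using this
  have hx₁m : x₁ < m := Nat.mod_lt _ hm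
  -- order of `a` is `m`, hence `gcd x₁ m = 1`
  have horda : orderOf (zmA m n r) = m := by
    refine Nat.dvd_antisymm (orderOf_dvd_of_pow_eq_one (zmA_pow m n r)) ?_
    have h1 : zmB m n r ^ 0 * zmA m n r ^ orderOf (zmA m n r)
        = zmB m n r ^ 0 * zmA m n r ^ 0 := by
      simpa using pow_orderOf_eq_one (zmA m n r)
    exact (Nat.modEq_zero_iff_dvd).mp ((NF _ _ _ _).mp h1).2
  have hgcd : Nat.gcd x₁ m = 1 := by
    have h1 : orderOf (f (zmA m n r)) = m := by rw [f.orderOf_eq, horda]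
    rcases Nat.eq_zero_or_pos x₁ with h0 | h0
    · rw [hfa, h0, pow_zero, orderOf_one] at h1
      rw [h0, ← h1, Nat.gcd_one_right]
    · rw [hfa, orderOf_pow' _ h0.ne', horda] at h1
      have h2 : Nat.gcd m x₁ = 1 := by
        rcases Nat.div_eq_self.mp h1 with h | h
        · omega
        · exact h
      rw [Nat.gcd_comm]; exact h2
  -- the image of `b`
  obtain ⟨u₁, v₁, hfb0⟩ := zm_nf m n r hm hn (f (zmB m n r))
  set y := u₁ % n with hydef
  set x₂ := v₁ % m with hx₂def
  have hfb : f (zmB m n r) = zmB m n r ^ y * zmA m n r ^ x₂ := by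
    rw [hfb0]
    exact (NF _ _ _ _).mpr ⟨(Nat.mod_modEq u₁ n).symm, (Nat.mod_modEq v₁ m).symm⟩
  have hym : y < n := Nat.mod_lt _ hn
  have hx₂m : x₂ < m := Nat.mod_lt _ hm
  -- the key congruence from the defining relation
  have hcong : x₁ * r ^ y + x₂ ≡ x₂ + x₁ * r [MOD m] := by
    have h1 : f (zmA m n r * zmB m n r) = f (zmB m n r * zmA m n r ^ r) :=
      congrArg f (zm_comm m n r)
    rw [map_mul, map_mul, map_pow, hfa, hfb] at h1
    have h2 : zmB m n r ^ y * zmA m n r ^ (x₁ * r ^ y + x₂)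
        = zmB m n r ^ y * zmA m n r ^ (x₂ + x₁ * r) := by
      calc zmB m n r ^ y * zmA m n r ^ (x₁ * r ^ y + x₂)
          = zmB m n r ^ y * zmA m n r ^ (x₁ * r ^ y) * zmA m n r ^ x₂ := by
            rw [pow_add, mul_assoc]
        _ = zmA m n r ^ x₁ * zmB m n r ^ y * zmA m n r ^ x₂ := by rw [zm_swap]
        _ = zmA m n r ^ x₁ * (zmB m n r ^ y * zmA m n r ^ x₂) := by rw [mul_assoc]
        _ = zmB m n r ^ y * zmA m n r ^ x₂ * (zmA m n r ^ x₁) ^ r := h1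
        _ = zmB m n r ^ y * zmA m n r ^ (x₂ + x₁ * r) := by
            rw [← pow_mul, pow_add, mul_assoc]
    exact ((NF _ _ _ _).mp h2).2
  -- deduce `r^y = r` in `ZMod m`
  have hzcong : ((x₁ : ℕ) : ZMod m) * ((r : ℕ) : ZMod m) ^ y + ((x₂ : ℕ) : ZMod m)
      = ((x₂ : ℕ) : ZMod m) + ((x₁ : ℕ) : ZMod m) * ((r : ℕ) : ZMod m) := by
    have := (ZMod.natCast_eq_natCast_iff _ _ _).mpr hcong
    push_cast at this
    exact this
  have hx₁u : IsUnit ((x₁ : ℕ) : ZMod m) :=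
    ⟨ZMod.unitOfCoprime x₁ hgcd, ZMod.coe_unitOfCoprime x₁ hgcd⟩
  have hry : ((r : ℕ) : ZMod m) ^ y = ((r : ℕ) : ZMod m) := by
    refine hx₁u.mul_left_cancel ?_
    linear_combination hzcong
  have hyd : y ≡ 1 [MOD orderOf ((r : ℕ) : ZMod m)] := by
    have hρy : hu.unit ^ y = hu.unit ^ 1 :=
      Units.ext (by rw [Units.val_pow_eq_pow_val, Units.val_pow_eq_pow_val, pow_one,
        hρr, hry])
    have h6 := pow_eq_pow_iff_modEq.mp hρy
    have horder : orderOf ((r : ℕ) : ZMod m) = orderOf hu.unit :=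
      (congrArg orderOf hρr.symm).trans orderOf_units
    rwa [horder]
  -- the general formula
  have hform : ∀ u v : ℕ, f (zmB m n r ^ u * zmA m n r ^ v) =
      zmB m n r ^ (y * u) * zmA m n r ^ (x₁ * v + x₂ * repunit r u) := by
    intro u v
    rw [map_mul, map_pow, map_pow, hfa, hfb, zm_pow, ← pow_mul]
    calc zmB m n r ^ (y * u) * zmA m n r ^ (x₂ * ∑ i ∈ Finset.range u, r ^ (y * i)) *
          zmA m n r ^ (x₁ * v)
        = zmB m n r ^ (y * u) *
            zmA m n r ^ (x₂ * (∑ i ∈ Finset.range u, r ^ (y * i)) + x₁ * v) := by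
          rw [pow_add, mul_assoc]
      _ = zmB m n r ^ (y * u) * zmA m n r ^ (x₁ * v + x₂ * repunit r u) := by
          refine (NF _ _ _ _).mpr ⟨Nat.ModEq.refl _, ?_⟩
          rw [← ZMod.natCast_eq_natCast_iff]
          push_cast
          have hterm : ∀ i : ℕ, ((r : ℕ) : ZMod m) ^ (y * i) = ((r : ℕ) : ZMod m) ^ i := by
            intro i
            rw [pow_mul, hry]
          rw [Finset.sum_congr rfl fun i _ => hterm i]
          rw [repunit]
          push_cast
          ring
  -- assemble
  refine ⟨(x₁, x₂, y), ⟨⟨hx₁m, hx₂m, hgcd, hym, hyd⟩, hform⟩, ?_⟩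
  rintro ⟨x₁', x₂', y'⟩ ⟨⟨h1, h2, h3, h4, h5⟩, hF⟩
  have e1 : x₁' = x₁ := by
    have ha : zmB m n r ^ (y' * 0) * zmA m n r ^ (x₁' * 1 + x₂' * repunit r 0)
        = zmB m n r ^ (y * 0) * zmA m n r ^ (x₁ * 1 + x₂ * repunit r 0) := by
      rw [← hF 0 1, ← hform 0 1]
    have := ((NF _ _ _ _).mp ha).2
    simp only [repunit, Finset.sum_range_zero, Nat.mul_zero, Nat.add_zero,
      Nat.mul_one] at this
    exact this.eq_of_lt_of_lt h1 hx₁m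
  have e23 : y' = y ∧ x₂' = x₂ := by
    have hb : zmB m n r ^ (y' * 1) * zmA m n r ^ (x₁' * 0 + x₂' * repunit r 1)
        = zmB m n r ^ (y * 1) * zmA m n r ^ (x₁ * 0 + x₂ * repunit r 1) := by
      rw [← hF 1 0, ← hform 1 0]
    have hrep1 : repunit r 1 = 1 := by simp [repunit]
    rw [hrep1] at hb
    have hc := (NF _ _ _ _).mp hb
    constructor
    · have := hc.1
      rw [Nat.mul_one, Nat.mul_one] at this
      exact this.eq_of_lt_of_lt h4 hym
    · have := hc.2
      rw [Nat.mul_zero, Nat.mul_zero, Nat.zero_add, Nat.zero_add, Nat.mul_one,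
        Nat.mul_one] at this
      exact this.eq_of_lt_of_lt h2 hx₂m
  rw [Prod.mk.injEq, Prod.mk.injEq]
  exact ⟨e1, e23.2, e23.1⟩
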